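/- For twice differentiable ξ with tξ''(t) ≠ 2ξ'(t) on an interval I ⊆ (0,∞), the Roter-type coefficients φ = −(6tξ − 4t²ξ' + t³ξ'')/(tξ'' − 2ξ')², μ = −(6ξξ' − 6tξ'² + 3tξξ'' + t²ξ'ξ'')/(t(tξ'' − 2ξ')²) [as given], η = −2(4ξξ'² − 4tξ'³ + 2tξξ'ξ'' + t²ξξ''²)/(t³(tξ'' − 2ξ')²) satisfy the consistency identity L₁ + φ⁻¹μ = 2φ⁻¹(μ² − φη), where L₁ = (ξ − tξ')/t³, provided φ ≠ 0. -/
import Mathlib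


noncomputable section

lemma key (t x y z : ℝ) (ht : t ≠ 0) (hd : t * z - 2 * y ≠ 0)
    (hN : 6 * t * x - 4 * t ^ 2 * y + t ^ 3 * z ≠ 0) :
    (x - t * y) / t ^ 3
      + (-(6 * t * x - 4 * t ^ 2 * y + t ^ 3 * z) / (t * z - 2 * y) ^ 2)⁻¹ *
        (-(6 * x * y - 6 * t * y ^ 2 + 3 * t * x * z + t ^ 2 * y * z) / (t * (t * z - 2 * y) ^ 2))
      = 2 * (-(6 * t * x - 4 * t ^ 2 * y + t ^ 3 * z) / (t * z - 2 * y) ^ 2)⁻¹ *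
          ((-(6 * x * y - 6 * t * y ^ 2 + 3 * t * x * z + t ^ 2 * y * z) /
              (t * (t * z - 2 * y) ^ 2)) ^ 2
            - (-(6 * t * x - 4 * t ^ 2 * y + t ^ 3 * z) / (t * z - 2 * y) ^ 2) *
              (-(2 * (4 * x * y ^ 2 - 4 * t * y ^ 3 + 2 * t * x * y * z + t ^ 2 * x * z ^ 2)) /
                (t ^ 3 * (t * z - 2 * y) ^ 2))) := by
  have hd2 : (t * z - 2 * y) ^ 2 ≠ 0 := pow_ne_zero _ hd
  have ht3 : (t : ℝ) ^ 3 ≠ 0 := pow_ne_zero _ ht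
  have hmN : -(6 * t * x - 4 * t ^ 2 * y + t ^ 3 * z) ≠ 0 := neg_ne_zero.mpr hN
  have h1 : -(6 * t * x - 4 * t ^ 2 * y + t ^ 3 * z) * (t * (t * z - 2 * y) ^ 2) ≠ 0 :=
    mul_ne_zero hmN (mul_ne_zero ht hd2)
  have h2 : (t * (t * z - 2 * y) ^ 2) ^ 2 ≠ 0 := pow_ne_zero _ (mul_ne_zero ht hd2)
  have h3 : (t * z - 2 * y) ^ 2 * (t ^ 3 * (t * z - 2 * y) ^ 2) ≠ 0 :=
    mul_ne_zero hd2 (mul_ne_zero ht3 hd2)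
  have h4 : (t * (t * z - 2 * y) ^ 2) ^ 2 * ((t * z - 2 * y) ^ 2 * (t ^ 3 * (t * z - 2 * y) ^ 2)) ≠ 0 :=
    mul_ne_zero h2 h3
  have h5 : t ^ 3 * (-(6 * t * x - 4 * t ^ 2 * y + t ^ 3 * z) * (t * (t * z - 2 * y) ^ 2)) ≠ 0 :=
    mul_ne_zero ht3 h1
  have h6 : -(6 * t * x - 4 * t ^ 2 * y + t ^ 3 * z) *
      ((t * (t * z - 2 * y) ^ 2) ^ 2 * ((t * z - 2 * y) ^ 2 * (t ^ 3 * (t * z - 2 * y) ^ 2))) ≠ 0 :=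
    mul_ne_zero hmN h4
  rw [inv_div, div_mul_div_comm, div_add_div _ _ ht3 h1, div_pow, div_mul_div_comm,
    div_sub_div _ _ h2 h3, mul_div_assoc', mul_div_assoc', div_mul_eq_mul_div, div_div,
    div_eq_div_iff h5 h6]
  ring

/-- The Roter-type coefficient `φ` of the 4-dimensional interior black hole metric. -/
def phiC (ξ ξ' ξ'' : ℝ → ℝ) (t : ℝ) : ℝ :=
  -(6 * t * ξ t - 4 * t ^ 2 * ξ' t + t ^ 3 * ξ'' t) / (t * ξ'' t - 2 * ξ' t) ^ 2

/-- The Roter-type coefficient `μ`. -/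
def muC (ξ ξ' ξ'' : ℝ → ℝ) (t : ℝ) : ℝ :=
  -(6 * ξ t * ξ' t - 6 * t * (ξ' t) ^ 2 + 3 * t * ξ t * ξ'' t + t ^ 2 * ξ' t * ξ'' t) /
    (t * (t * ξ'' t - 2 * ξ' t) ^ 2)

/-- The Roter-type coefficient `η`. -/
def etaC (ξ ξ' ξ'' : ℝ → ℝ) (t : ℝ) : ℝ :=
  -(2 * (4 * ξ t * (ξ' t) ^ 2 - 4 * t * (ξ' t) ^ 3 + 2 * t * ξ t * ξ' t * ξ'' t
      + t ^ 2 * ξ t * (ξ'' t) ^ 2)) /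
    (t ^ 3 * (t * ξ'' t - 2 * ξ' t) ^ 2)

/-- Consistency identity `L₁ + φ⁻¹μ = 2φ⁻¹(μ² − φη)` for the Roter-type
coefficients of the 4-dimensional interior black hole metric, where
`L₁ = (ξ − tξ')/t³`. -/
theorem stmt_17 (a b : ℝ) (ha : 0 ≤ a) (hab : a < b)
    (ξ ξ' ξ'' : ℝ → ℝ)
    (hξ : ∀ t ∈ Set.Ioo a b, HasDerivAt ξ (ξ' t) t)
    (hξ' : ∀ t ∈ Set.Ioo a b, HasDerivAt ξ' (ξ'' t) t)
    (hden : ∀ t ∈ Set.Ioo a b, t * ξ'' t ≠ 2 * ξ' t)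
    (hφ : ∀ t ∈ Set.Ioo a b, phiC ξ ξ' ξ'' t ≠ 0) :
    ∀ t ∈ Set.Ioo a b,
      (ξ t - t * ξ' t) / t ^ 3 + (phiC ξ ξ' ξ'' t)⁻¹ * muC ξ ξ' ξ'' t
        = 2 * (phiC ξ ξ' ξ'' t)⁻¹ *
            ((muC ξ ξ' ξ'' t) ^ 2 - phiC ξ ξ' ξ'' t * etaC ξ ξ' ξ'' t) := by
  intro t ht
  have ht0 : (0:ℝ) < t := lt_of_le_of_lt ha ht.1
  have ht' : t ≠ 0 := ne_of_gt ht0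
  have hD : t * ξ'' t - 2 * ξ' t ≠ 0 := sub_ne_zero.mpr (hden t ht)
  have hN : 6 * t * ξ t - 4 * t ^ 2 * ξ' t + t ^ 3 * ξ'' t ≠ 0 := by
    intro h
    apply hφ t ht
    simp [phiC, h]
  simp only [phiC, muC, etaC]
  exact key t (ξ t) (ξ' t) (ξ'' t) ht' hD hN

end
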